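/- Let q be a power of 3, H = 𝔽_{q³}(T), σ the q-Frobenius automorphism of H over F = 𝔽_q(T), and take π = T. Then the set {(x_1, x_2, x_3) ∈ 𝔽_{q³}[T]³ : M_{(x_1,x_2,x_3)}³ = T·I₃} has exactly q² + q + 1 elements. -/

import Mathlib

open Polynomial



private lemma aux_cube {K : Type*} [Field K] {p : Polynomial K} (hp : p ^ 3 = X) : False := by
  have h := congrArg natDegree hp
  rw [natDegree_pow, natDegree_X] at h
  omega

private lemma aux_max4 {K : Type*} [Field K] {T1 T2 T3 T4 : Polynomial K}
    (hs : T1 + T2 + T3 = X + T4)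
    (h1 : T1 = 0 ∨ T1.natDegree % 3 = 0)
    (h2 : T2 = 0 ∨ T2.natDegree % 3 = 1)
    (h3 : T3 ≠ 0) (hn3 : T3.natDegree % 3 = 2) :
    T4 ≠ 0 ∧ T1.natDegree ≤ T4.natDegree ∧ T2.natDegree ≤ T4.natDegree
      ∧ T3.natDegree ≤ T4.natDegree := by
  set M := max (max (max T1.natDegree T2.natDegree) T3.natDegree) T4.natDegree with hM
  have hMge : 2 ≤ M := by omega
  have hco : T1.coeff M + T2.coeff M + T3.coeff M = T4.coeff M := by
    have h := congrArg (fun p : Polynomial K => p.coeff M) hs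
    simp only [coeff_add] at h
    rw [coeff_X, if_neg (by omega : ¬ (1 = M))] at h
    simpa using h
  by_cases hT4 : T4 ≠ 0 ∧ T4.natDegree = M
  · exact ⟨hT4.1, by omega, by omega, by omega⟩
  · exfalso
    have hco4 : T4.coeff M = 0 := by
      rcases eq_or_ne T4 0 with h | h
      · simp [h]
      · exact coeff_eq_zero_of_natDegree_lt
          (lt_of_le_of_ne (by omega) fun he => hT4 ⟨h, he⟩)
    have hcase : M = T1.natDegree ∨ M = T2.natDegree ∨ M = T3.natDegree ∨ M = T4.natDegree := by
      omega
    rcases hcase with hm | hm | hm | hm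
    · have hT1 : T1 ≠ 0 := by rintro rfl; simp only [natDegree_zero] at hm; omega
      have e1 : T1.natDegree % 3 = 0 := h1.resolve_left hT1
      have c2 : T2.coeff M = 0 := by
        rcases h2 with h | h
        · simp [h]
        · exact coeff_eq_zero_of_natDegree_lt (lt_of_le_of_ne (by omega) (by omega))
      have c3 : T3.coeff M = 0 :=
        coeff_eq_zero_of_natDegree_lt (lt_of_le_of_ne (by omega) (by omega))
      have c1 : T1.coeff M = 0 := by rw [c2, c3, hco4] at hco; simpa using hco
      rw [hm, coeff_natDegree] at c1
      exact hT1 (leadingCoeff_eq_zero.mp c1)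
    · have hT2 : T2 ≠ 0 := by rintro rfl; simp only [natDegree_zero] at hm; omega
      have e2 : T2.natDegree % 3 = 1 := h2.resolve_left hT2
      have c1 : T1.coeff M = 0 := by
        rcases h1 with h | h
        · simp [h]
        · exact coeff_eq_zero_of_natDegree_lt (lt_of_le_of_ne (by omega) (by omega))
      have c3 : T3.coeff M = 0 :=
        coeff_eq_zero_of_natDegree_lt (lt_of_le_of_ne (by omega) (by omega))
      have c2 : T2.coeff M = 0 := by rw [c1, c3, hco4] at hco; simpa using hco
      rw [hm, coeff_natDegree] at c2
      exact hT2 (leadingCoeff_eq_zero.mp c2)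
    · have c1 : T1.coeff M = 0 := by
        rcases h1 with h | h
        · simp [h]
        · exact coeff_eq_zero_of_natDegree_lt (lt_of_le_of_ne (by omega) (by omega))
      have c2 : T2.coeff M = 0 := by
        rcases h2 with h | h
        · simp [h]
        · exact coeff_eq_zero_of_natDegree_lt (lt_of_le_of_ne (by omega) (by omega))
      have c3 : T3.coeff M = 0 := by rw [c1, c2, hco4] at hco; simpa using hco
      rw [hm, coeff_natDegree] at c3
      exact h3 (leadingCoeff_eq_zero.mp c3)
    · rcases eq_or_ne T4 0 with h | h
      · rw [h] at hm; simp only [natDegree_zero] at hm; omega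
      · exact hT4 ⟨h, hm.symm⟩


private lemma aux_final3 {K : Type*} [Field K] (f : K →+* K) (a b c : Polynomial K)
    (hE : a ^ 3 + X * (b * (b.map f * (b.map f).map f))
        + X ^ 2 * (c * (c.map f * (c.map f).map f)) = X) :
    a = 0 ∧ c = 0 ∧ ∃ β : K, b = C β ∧ β * f β * f (f β) = 1 := by
  have hdm : ∀ p : Polynomial K, (p.map f).natDegree = p.natDegree :=
    fun p => natDegree_map_eq_of_injective f.injective p
  have hc : c = 0 := by
    by_contra hc
    have hc1 : c.map f ≠ 0 := map_ne_zero hc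
    have hc2 : (c.map f).map f ≠ 0 := map_ne_zero hc1
    have hNcne : c * (c.map f * (c.map f).map f) ≠ 0 := mul_ne_zero hc (mul_ne_zero hc1 hc2)
    have hT3ne : X ^ 2 * (c * (c.map f * (c.map f).map f)) ≠ 0 :=
      mul_ne_zero (pow_ne_zero 2 X_ne_zero) hNcne
    have hn3 : (X ^ 2 * (c * (c.map f * (c.map f).map f))).natDegree = 2 + 3 * c.natDegree := by
      rw [natDegree_mul (pow_ne_zero 2 X_ne_zero) hNcne, natDegree_X_pow,
        natDegree_mul hc (mul_ne_zero hc1 hc2), natDegree_mul hc1 hc2]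
      simp only [hdm]; ring
    have h1 : a ^ 3 = 0 ∨ (a ^ 3).natDegree % 3 = 0 := by
      rcases eq_or_ne a 0 with rfl | ha
      · left; simp
      · right; rw [natDegree_pow]; omega
    have h2 : X * (b * (b.map f * (b.map f).map f)) = 0
        ∨ (X * (b * (b.map f * (b.map f).map f))).natDegree % 3 = 1 := by
      rcases eq_or_ne b 0 with rfl | hb
      · left; simp
      · right
        have hb1 : b.map f ≠ 0 := map_ne_zero hb
        have hb2 : (b.map f).map f ≠ 0 := map_ne_zero hb1
        have hNbne : b * (b.map f * (b.map f).map f) ≠ 0 := mul_ne_zero hb (mul_ne_zero hb1 hb2)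
        rw [natDegree_mul X_ne_zero hNbne, natDegree_X,
          natDegree_mul hb (mul_ne_zero hb1 hb2), natDegree_mul hb1 hb2]
        simp only [hdm]; omega
    obtain ⟨h0, -, -, -⟩ := aux_max4 (T4 := 0) (by rw [add_zero]; exact hE) h1 h2 hT3ne
      (by rw [hn3]; omega)
    exact h0 rfl
  rw [hc] at hE
  simp only [Polynomial.map_zero, mul_zero, zero_mul, add_zero] at hE
  -- now hE : a ^ 3 + X * (b * (b.map f * (b.map f).map f)) = X
  have hb : b ≠ 0 := by
    rintro rfl
    simp only [Polynomial.map_zero, mul_zero, zero_mul, add_zero] at hE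
    exact aux_cube hE
  have hb1 : b.map f ≠ 0 := map_ne_zero hb
  have hb2 : (b.map f).map f ≠ 0 := map_ne_zero hb1
  have hNbne : b * (b.map f * (b.map f).map f) ≠ 0 := mul_ne_zero hb (mul_ne_zero hb1 hb2)
  have hT2ne : X * (b * (b.map f * (b.map f).map f)) ≠ 0 := mul_ne_zero X_ne_zero hNbne
  have hn2 : (X * (b * (b.map f * (b.map f).map f))).natDegree = 1 + 3 * b.natDegree := by
    rw [natDegree_mul X_ne_zero hNbne, natDegree_X,
      natDegree_mul hb (mul_ne_zero hb1 hb2), natDegree_mul hb1 hb2]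
    simp only [hdm]; ring
  have ha : a = 0 := by
    by_contra ha
    have hT1ne : a ^ 3 ≠ 0 := pow_ne_zero 3 ha
    have hn1 : (a ^ 3).natDegree = 3 * a.natDegree := natDegree_pow a 3
    by_cases hA0 : a.natDegree = 0
    · -- constant a: coefficient at 0
      have hα := eq_C_of_natDegree_eq_zero hA0
      have h := congrArg (fun p : Polynomial K => p.coeff 0) hE
      simp only [coeff_add, mul_coeff_zero, coeff_X_zero, zero_mul, add_zero] at h
      rw [hα, ← C_pow, coeff_C] at h
      simp only [if_pos rfl] at h
      have : a.coeff 0 = 0 := pow_eq_zero_iff (by norm_num : (3:ℕ) ≠ 0) |>.mp h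
      exact ha (by rw [hα, this, C_0])
    · set M := max (a ^ 3).natDegree (X * (b * (b.map f * (b.map f).map f))).natDegree with hM
      have hMge : 3 ≤ M := by omega
      have hco : (a ^ 3).coeff M + (X * (b * (b.map f * (b.map f).map f))).coeff M = 0 := by
        have h := congrArg (fun p : Polynomial K => p.coeff M) hE
        simp only [coeff_add] at h
        rw [coeff_X, if_neg (by omega : ¬ (1 = M))] at h
        exact h
      rcases (by omega : M = (a ^ 3).natDegree
          ∨ M = (X * (b * (b.map f * (b.map f).map f))).natDegree) with hm | hm
      · have c2 : (X * (b * (b.map f * (b.map f).map f))).coeff M = 0 :=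
          coeff_eq_zero_of_natDegree_lt (lt_of_le_of_ne (by omega) (by omega))
        have c1 : (a ^ 3).coeff M = 0 := by rw [c2] at hco; simpa using hco
        rw [hm, coeff_natDegree] at c1
        exact hT1ne (leadingCoeff_eq_zero.mp c1)
      · have c1 : (a ^ 3).coeff M = 0 :=
          coeff_eq_zero_of_natDegree_lt (lt_of_le_of_ne (by omega) (by omega))
        have c2 : (X * (b * (b.map f * (b.map f).map f))).coeff M = 0 := by
          rw [c1] at hco; simpa using hco
        rw [hm, coeff_natDegree] at c2
        exact hT2ne (leadingCoeff_eq_zero.mp c2)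
  rw [ha] at hE
  simp only [zero_pow, ne_eq, OfNat.ofNat_ne_zero, not_false_eq_true, zero_add] at hE
  have hNb1 : b * (b.map f * (b.map f).map f) = 1 := by
    apply mul_left_cancel₀ (X_ne_zero (R := K))
    rw [mul_one]; exact hE
  have hBdeg : b.natDegree = 0 := by
    have h := congrArg natDegree hNb1
    rw [natDegree_mul hb (mul_ne_zero hb1 hb2), natDegree_mul hb1 hb2, natDegree_one] at h
    simp only [hdm] at h
    omega
  have hCb := eq_C_of_natDegree_eq_zero hBdeg
  refine ⟨ha, hc, b.coeff 0, hCb, ?_⟩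
  rw [hCb] at hNb1
  simp only [Polynomial.map_C] at hNb1
  have hC1 : C (b.coeff 0 * (f (b.coeff 0) * f (f (b.coeff 0)))) = (C 1 : Polynomial K) := by
    rw [C_mul, C_mul, C_1]; exact hNb1
  have h := C_injective hC1
  linear_combination h

private lemma aux_four {K : Type*} [Field K] (f : K →+* K) (a b c : Polynomial K)
    (hb : b ≠ 0) (hc : c ≠ 0)
    (hu : a - a.map f ≠ 0)
    (hd : b * c.map f - (b.map f).map f * c ≠ 0)
    (hQ : (a - a.map f) ^ 2
        + X * (b * c.map f + b.map f * (c.map f).map f + (b.map f).map f * c) = 0)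
    (hE : a ^ 3 + X * (b * (b.map f * (b.map f).map f))
        + X ^ 2 * (c * (c.map f * (c.map f).map f))
        = X + X * ((a - a.map f) * (b * c.map f - (b.map f).map f * c))) : False := by
  have hdm : ∀ p : Polynomial K, (p.map f).natDegree = p.natDegree :=
    fun p => natDegree_map_eq_of_injective f.injective p
  have hb1 : b.map f ≠ 0 := map_ne_zero hb
  have hb2 : (b.map f).map f ≠ 0 := map_ne_zero hb1
  have hc1 : c.map f ≠ 0 := map_ne_zero hc
  have hc2 : (c.map f).map f ≠ 0 := map_ne_zero hc1
  -- the "alpha" inequality from hQ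
  have hPne : b * c.map f + b.map f * (c.map f).map f + (b.map f).map f * c ≠ 0 := by
    intro h0
    apply hu
    have h1 : (a - a.map f) ^ 2 = 0 := by rw [h0, mul_zero, add_zero] at hQ; exact hQ
    exact pow_eq_zero_iff (by norm_num : (2:ℕ) ≠ 0) |>.mp h1
  have hPd : (b * c.map f + b.map f * (c.map f).map f + (b.map f).map f * c).natDegree
      ≤ b.natDegree + c.natDegree := by
    have e1 : (b * c.map f).natDegree ≤ b.natDegree + c.natDegree := by
      simpa [hdm] using natDegree_mul_le (p := b) (q := c.map f)
    have e2 : (b.map f * (c.map f).map f).natDegree ≤ b.natDegree + c.natDegree := by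
      simpa [hdm] using natDegree_mul_le (p := b.map f) (q := (c.map f).map f)
    have e3 : ((b.map f).map f * c).natDegree ≤ b.natDegree + c.natDegree := by
      simpa [hdm] using natDegree_mul_le (p := (b.map f).map f) (q := c)
    exact le_trans (natDegree_add_le _ _)
      (max_le (le_trans (natDegree_add_le _ _) (max_le e1 e2)) e3)
  have halpha : 2 * (a - a.map f).natDegree ≤ 1 + (b.natDegree + c.natDegree) := by
    have h1 : (a - a.map f) ^ 2
        = -(X * (b * c.map f + b.map f * (c.map f).map f + (b.map f).map f * c)) := by
      linear_combination hQ
    have h2 := congrArg natDegree h1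
    rw [natDegree_pow, natDegree_neg, natDegree_mul X_ne_zero hPne, natDegree_X] at h2
    omega
  -- degrees of the three main terms
  have hNbne : b * (b.map f * (b.map f).map f) ≠ 0 := mul_ne_zero hb (mul_ne_zero hb1 hb2)
  have hNcne : c * (c.map f * (c.map f).map f) ≠ 0 := mul_ne_zero hc (mul_ne_zero hc1 hc2)
  have hn2 : (X * (b * (b.map f * (b.map f).map f))).natDegree = 1 + 3 * b.natDegree := by
    rw [natDegree_mul X_ne_zero hNbne, natDegree_X,
      natDegree_mul hb (mul_ne_zero hb1 hb2), natDegree_mul hb1 hb2]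
    simp only [hdm]; ring
  have hn3 : (X ^ 2 * (c * (c.map f * (c.map f).map f))).natDegree = 2 + 3 * c.natDegree := by
    rw [natDegree_mul (pow_ne_zero 2 X_ne_zero) hNcne, natDegree_X_pow,
      natDegree_mul hc (mul_ne_zero hc1 hc2), natDegree_mul hc1 hc2]
    simp only [hdm]; ring
  have h1or : a ^ 3 = 0 ∨ (a ^ 3).natDegree % 3 = 0 := by
    rcases eq_or_ne a 0 with rfl | ha
    · left; simp
    · right; rw [natDegree_pow]; omega
  have hddeg : (b * c.map f - (b.map f).map f * c).natDegree ≤ b.natDegree + c.natDegree := by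
    have e1 : (b * c.map f).natDegree ≤ b.natDegree + c.natDegree := by
      simpa [hdm] using natDegree_mul_le (p := b) (q := c.map f)
    have e3 : ((b.map f).map f * c).natDegree ≤ b.natDegree + c.natDegree := by
      simpa [hdm] using natDegree_mul_le (p := (b.map f).map f) (q := c)
    exact le_trans (natDegree_sub_le _ _) (max_le e1 e3)
  have hn4 : (X * ((a - a.map f) * (b * c.map f - (b.map f).map f * c))).natDegree
      = 1 + ((a - a.map f).natDegree + (b * c.map f - (b.map f).map f * c).natDegree) := by
    rw [natDegree_mul X_ne_zero (mul_ne_zero hu hd), natDegree_mul hu hd, natDegree_X]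
  obtain ⟨-, -, hle2, hle3⟩ := aux_max4 hE h1or (Or.inr (by rw [hn2]; omega))
    (mul_ne_zero (pow_ne_zero 2 X_ne_zero) hNcne) (by rw [hn3]; omega)
  rw [hn2, hn4] at hle2
  rw [hn3, hn4] at hle3
  omega

/-- The twisted matrix `M_{(x₁,x₂,x₃)}` of the paper (rank `3`), over a commutative ring
with a ring endomorphism `σ` and parameter `π`. -/
noncomputable def M3 {R : Type*} [CommRing R] (σ : R →+* R) (π x₁ x₂ x₃ : R) :
    Matrix (Fin 3) (Fin 3) R :=
  !![x₁, x₂, x₃;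
     π * σ x₃, σ x₁, σ x₂;
     π * σ (σ x₂), π * σ (σ x₃), σ (σ x₁)]

open Polynomial in
/-- Section 5.1.2 (the inseparable case): for `q` a power of `3`, with `π = T` and `σ` the
coefficientwise `q`-Frobenius of `𝔽_{q³}[T]`, the set of triples `(x₁,x₂,x₃) ∈ 𝔽_{q³}[T]³`
with `M_{(x₁,x₂,x₃)}³ = T·I₃` has exactly `q² + q + 1` elements. -/
theorem stmt16 (q : ℕ) (hq3 : ∃ k : ℕ, 0 < k ∧ q = 3 ^ k)
    (Fqr : Type) [Field Fqr] [Fintype Fqr] (hcard : Fintype.card Fqr = q ^ 3)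
    (σ₀ : Fqr →+* Fqr) (hσ₀ : ∀ a : Fqr, σ₀ a = a ^ q) :
    {x : Polynomial Fqr × Polynomial Fqr × Polynomial Fqr |
        (M3 (Polynomial.mapRingHom σ₀) (X : Polynomial Fqr) x.1 x.2.1 x.2.2) ^ 3
          = (X : Polynomial Fqr) • (1 : Matrix (Fin 3) (Fin 3) (Polynomial Fqr))}.encard
      = ((q ^ 2 + q + 1 : ℕ) : ℕ∞) := by
  classical
  obtain ⟨k, hkpos, hqk⟩ := hq3
  have hq3le : 3 ≤ q := by
    have h1 : (3:ℕ) ^ 1 ≤ 3 ^ k := Nat.pow_le_pow_right (by norm_num) hkpos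
    simpa [hqk] using h1
  -- characteristic 3
  haveI hch3 : CharP Fqr 3 := by
    obtain ⟨n, hp, hc⟩ := FiniteField.card Fqr (ringChar Fqr)
    have hdvd : ringChar Fqr ∣ 3 ^ (3 * k) := by
      have : (ringChar Fqr) ^ (n:ℕ) = 3 ^ (3*k) := by
        rw [← hc, hcard, hqk, ← pow_mul, Nat.mul_comm]
      exact this ▸ dvd_pow_self (ringChar Fqr) (by positivity)
    have h3 : ringChar Fqr = 3 :=
      (Nat.prime_dvd_prime_iff_eq hp Nat.prime_three).mp (hp.dvd_of_dvd_pow hdvd)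
    exact h3 ▸ ringChar.charP Fqr
  have h3R : (3 : Polynomial Fqr) = 0 := by
    exact_mod_cast CharP.cast_eq_zero (Polynomial Fqr) 3
  have hdm : ∀ p : Polynomial Fqr, (p.map σ₀).natDegree = p.natDegree :=
    fun p => natDegree_map_eq_of_injective σ₀.injective p
  have hpow : ∀ γ : Fqr, γ ^ (q ^ 2 + q + 1) = γ * σ₀ γ * σ₀ (σ₀ γ) := by
    intro γ
    rw [hσ₀ γ, hσ₀ (γ ^ q), ← pow_mul,
      show q ^ 2 + q + 1 = 1 + q + q * q from by ring, pow_add, pow_add, pow_one]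
  have hX1 : (X : Polynomial Fqr) • (1 : Matrix (Fin 3) (Fin 3) (Polynomial Fqr))
      = !![X, 0, 0; 0, X, 0; 0, 0, X] := by
    rw [← Matrix.ext_iff]
    intro i j
    fin_cases i <;> fin_cases j <;>
      simp [Matrix.smul_apply, Matrix.one_apply, smul_eq_mul, Matrix.vecHead, Matrix.vecTail]
  have hSeq : {x : Polynomial Fqr × Polynomial Fqr × Polynomial Fqr |
        (M3 (Polynomial.mapRingHom σ₀) (X : Polynomial Fqr) x.1 x.2.1 x.2.2) ^ 3
          = (X : Polynomial Fqr) • (1 : Matrix (Fin 3) (Fin 3) (Polynomial Fqr))}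
      = (fun β : Fqr => ((0 : Polynomial Fqr), (C β : Polynomial Fqr), (0 : Polynomial Fqr)))
        '' {β : Fqr | β ^ (q ^ 2 + q + 1) = 1} := by
    ext x
    obtain ⟨a, b, c⟩ := x
    simp only [Set.mem_setOf_eq, Set.mem_image]
    constructor
    · intro hmem
      rw [show M3 (Polynomial.mapRingHom σ₀) (X : Polynomial Fqr) a b c
          = !![a, b, c;
               X * map σ₀ c, map σ₀ a, map σ₀ b;
               X * map σ₀ (map σ₀ b), X * map σ₀ (map σ₀ c), map σ₀ (map σ₀ a)] from rfl,
        pow_succ, pow_succ, pow_one, Matrix.mul_fin_three, Matrix.mul_fin_three, hX1,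
        ← Matrix.ext_iff] at hmem
      have h00 := hmem 0 0
      have h01 := hmem 0 1
      have h10 := hmem 1 0
      simp only [Matrix.cons_val', Matrix.cons_val_zero, Matrix.empty_val',
        Matrix.cons_val_fin_one, Matrix.cons_val_one, Matrix.head_cons,
        Matrix.head_fin_const, Matrix.of_apply] at h00 h01 h10
      -- trace is zero
      have hA : (X : Polynomial Fqr) * ((a + map σ₀ a + map σ₀ (map σ₀ a)) *
          (b * map σ₀ b * map σ₀ (map σ₀ b) - X * (c * map σ₀ c * map σ₀ (map σ₀ c)))) = 0 := by
        linear_combination b * h10 - X * map σ₀ c * h01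
      have ht : a + map σ₀ a + map σ₀ (map σ₀ a) = 0 := by
        rcases mul_eq_zero.mp hA with hX0 | hA'
        · exact absurd hX0 X_ne_zero
        rcases mul_eq_zero.mp hA' with ht | hNb
        · exact ht
        exfalso
        by_cases hb : b = 0
        · have hc : c = 0 := by
            by_contra hc
            have hne : (X : Polynomial Fqr) * (c * map σ₀ c * map σ₀ (map σ₀ c)) ≠ 0 :=
              mul_ne_zero X_ne_zero (mul_ne_zero (mul_ne_zero hc (map_ne_zero hc))
                (map_ne_zero (map_ne_zero hc)))
            apply hne
            linear_combination -hNb + (map σ₀ b * map σ₀ (map σ₀ b)) * hb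
          rw [hb, hc] at h00
          simp only [Polynomial.map_zero, mul_zero, zero_mul, add_zero, zero_add] at h00
          exact aux_cube (show a ^ 3 = X by linear_combination h00)
        · have hb1 : map σ₀ b ≠ 0 := map_ne_zero hb
          have hb2 : map σ₀ (map σ₀ b) ≠ 0 := map_ne_zero hb1
          have hc : c ≠ 0 := by
            rintro rfl
            apply mul_ne_zero (mul_ne_zero hb hb1) hb2
            linear_combination hNb
          have hc1 : map σ₀ c ≠ 0 := map_ne_zero hc
          have hc2 : map σ₀ (map σ₀ c) ≠ 0 := map_ne_zero hc1
          have hNcne : c * map σ₀ c * map σ₀ (map σ₀ c) ≠ 0 :=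
            mul_ne_zero (mul_ne_zero hc hc1) hc2
          have heq : b * map σ₀ b * map σ₀ (map σ₀ b)
              = X * (c * map σ₀ c * map σ₀ (map σ₀ c)) := by linear_combination hNb
          have hdeg := congrArg natDegree heq
          rw [natDegree_mul (mul_ne_zero hb hb1) hb2, natDegree_mul hb hb1,
            natDegree_mul X_ne_zero hNcne, natDegree_mul (mul_ne_zero hc hc1) hc2,
            natDegree_mul hc hc1, natDegree_X] at hdeg
          simp only [hdm] at hdeg
          omega
      -- the quadratic relation
      have hbQ : b * ((a - map σ₀ a) ^ 2 + X * (b * map σ₀ c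
          + map σ₀ b * map σ₀ (map σ₀ c) + map σ₀ (map σ₀ b) * c)) = 0 := by
        linear_combination h01 - (X * c * map σ₀ (map σ₀ c)) * ht - (a * map σ₀ a * b) * h3R
      have hcQ : map σ₀ c * ((a - map σ₀ a) ^ 2 + X * (b * map σ₀ c
          + map σ₀ b * map σ₀ (map σ₀ c) + map σ₀ (map σ₀ b) * c)) = 0 := by
        have hXQ : (X : Polynomial Fqr) * (map σ₀ c * ((a - map σ₀ a) ^ 2 + X * (b * map σ₀ c
            + map σ₀ b * map σ₀ (map σ₀ c) + map σ₀ (map σ₀ b) * c))) = 0 := by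
          linear_combination h10 - (X * map σ₀ b * map σ₀ (map σ₀ b)) * ht
            - (X * a * map σ₀ a * map σ₀ c) * h3R
        rcases mul_eq_zero.mp hXQ with h | h
        · exact absurd h X_ne_zero
        · exact h
      -- common finishing move
      have finish3 : a ^ 3 + X * (b * (map σ₀ b * map σ₀ (map σ₀ b)))
          + X ^ 2 * (c * (map σ₀ c * map σ₀ (map σ₀ c))) = X →
          ∃ β : Fqr, β ∈ {β : Fqr | β ^ (q ^ 2 + q + 1) = 1}
            ∧ ((0 : Polynomial Fqr), (C β : Polynomial Fqr), (0 : Polynomial Fqr)) = (a, b, c) := by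
        intro hE3
        obtain ⟨ha0, hc0, β, hCβ, hβ⟩ := aux_final3 σ₀ a b c hE3
        refine ⟨β, ?_, ?_⟩
        · show β ^ (q ^ 2 + q + 1) = 1
          rw [hpow β]; exact hβ
        · rw [ha0, hc0, hCβ]
      by_cases hQ0 : (a - map σ₀ a) ^ 2 + X * (b * map σ₀ c
          + map σ₀ b * map σ₀ (map σ₀ c) + map σ₀ (map σ₀ b) * c) = 0
      · by_cases hu : a - map σ₀ a = 0
        · have ha1 : map σ₀ a = a := (sub_eq_zero.mp hu).symm
          simp only [ha1] at h00
          exact finish3 (by linear_combination h00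
            - (X * a * map σ₀ (map σ₀ b) * c + X * a * b * map σ₀ c) * h3R)
        · have hb : b ≠ 0 := by
            rintro rfl
            apply hu
            simp only [Polynomial.map_zero, zero_mul, mul_zero, add_zero, zero_add] at hQ0
            exact pow_eq_zero_iff (by norm_num : (2:ℕ) ≠ 0) |>.mp hQ0
          have hc : c ≠ 0 := by
            rintro rfl
            apply hu
            simp only [Polynomial.map_zero, zero_mul, mul_zero, add_zero, zero_add] at hQ0
            exact pow_eq_zero_iff (by norm_num : (2:ℕ) ≠ 0) |>.mp hQ0
          by_cases hbc : b * map σ₀ c - map σ₀ (map σ₀ b) * c = 0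
          · exact finish3 (by linear_combination h00 - (X * map σ₀ (map σ₀ b) * c) * ht
              - (X * a * b * map σ₀ c) * h3R + (X * (a - map σ₀ a)) * hbc)
          · have hE4 : a ^ 3 + X * (b * (map σ₀ b * map σ₀ (map σ₀ b)))
                + X ^ 2 * (c * (map σ₀ c * map σ₀ (map σ₀ c)))
                = X + X * ((a - map σ₀ a) * (b * map σ₀ c - map σ₀ (map σ₀ b) * c)) := by
              linear_combination h00 - (X * map σ₀ (map σ₀ b) * c) * ht
                - (X * a * b * map σ₀ c) * h3R
            exact (aux_four σ₀ a b c hb hc hu hbc hQ0 hE4).elim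
      · have hb0 : b = 0 := by
          rcases mul_eq_zero.mp hbQ with h | h
          · exact h
          · exact absurd h hQ0
        have hc0 : c = 0 := by
          rcases mul_eq_zero.mp hcQ with h | h
          · exact (Polynomial.map_eq_zero σ₀).mp h
          · exact absurd h hQ0
        rw [hb0, hc0] at h00
        simp only [Polynomial.map_zero, mul_zero, zero_mul, add_zero, zero_add] at h00
        exact (aux_cube (show a ^ 3 = X by linear_combination h00)).elim
    · rintro ⟨β, hβ, heq⟩
      have hβ1 : β * σ₀ β * σ₀ (σ₀ β) = 1 := by rw [← hpow β]; exact hβ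
      have hβC : (C β : Polynomial Fqr) * C (σ₀ β) * C (σ₀ (σ₀ β)) = 1 := by
        rw [← C_mul, ← C_mul, hβ1, C_1]
      obtain ⟨h1, h2, h3⟩ : (0 : Polynomial Fqr) = a ∧ (C β : Polynomial Fqr) = b
          ∧ (0 : Polynomial Fqr) = c := by
        refine ⟨congrArg Prod.fst heq, ?_, ?_⟩
        · exact congrArg (fun t => t.2.1) heq
        · exact congrArg (fun t => t.2.2) heq
      subst h1; subst h2; subst h3
      rw [show M3 (Polynomial.mapRingHom σ₀) (X : Polynomial Fqr) 0 (C β) 0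
          = !![0, C β, 0;
               X * map σ₀ 0, map σ₀ 0, map σ₀ (C β);
               X * map σ₀ (map σ₀ (C β)), X * map σ₀ (map σ₀ 0), map σ₀ (map σ₀ 0)] from rfl]
      simp only [Polynomial.map_zero, mul_zero, Polynomial.map_C]
      rw [pow_succ, pow_succ, pow_one, Matrix.mul_fin_three, Matrix.mul_fin_three, hX1]
      rw [← Matrix.ext_iff]
      intro i j
      fin_cases i <;> fin_cases j <;>
        simp [Matrix.vecHead, Matrix.vecTail] <;>
        linear_combination (X : Polynomial Fqr) * hβC
  rw [hSeq]
  have hfinj : Function.Injective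
      (fun β : Fqr => ((0 : Polynomial Fqr), (C β : Polynomial Fqr), (0 : Polynomial Fqr))) := by
    intro x y h
    exact C_injective (congrArg (fun t : Polynomial Fqr × Polynomial Fqr × Polynomial Fqr
      => t.2.1) h)
  rw [hfinj.encard_image]
  -- counting roots of unity
  have hn0 : 0 < q ^ 2 + q + 1 := by positivity
  have hdvd3 : q ^ 2 + q + 1 ∣ q ^ 3 - 1 := by
    obtain ⟨m, rfl⟩ : ∃ m, q = m + 1 := ⟨q - 1, by omega⟩
    exact ⟨m, Nat.sub_eq_of_eq_add (by ring)⟩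
  obtain ⟨g, hg⟩ := IsCyclic.exists_ofOrder_eq_natCard (α := Fqrˣ)
  have hgord : orderOf g = q ^ 3 - 1 := by
    rw [hg, Nat.card_eq_fintype_card, Fintype.card_units, hcard]
  have hone : orderOf g ≠ 0 := by
    rw [hgord]
    have h1 : 1 < q ^ 3 := Nat.one_lt_pow (by norm_num) (by omega)
    omega
  have hdvd' : q ^ 2 + q + 1 ∣ orderOf g := by rw [hgord]; exact hdvd3
  have hζ := orderOf_pow_orderOf_div hone hdvd'
  have hprim : IsPrimitiveRoot (((g ^ (orderOf g / (q ^ 2 + q + 1)) : Fqrˣ)) : Fqr)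
      (q ^ 2 + q + 1) := by
    have h := IsPrimitiveRoot.orderOf (((g ^ (orderOf g / (q ^ 2 + q + 1)) : Fqrˣ)) : Fqr)
    rwa [orderOf_units, hζ] at h
  have hsetroots : {β : Fqr | β ^ (q ^ 2 + q + 1) = 1}
      = ↑(Polynomial.nthRootsFinset (q ^ 2 + q + 1) (1 : Fqr)) := by
    ext β
    simp [Polynomial.mem_nthRootsFinset hn0 (1 : Fqr)]
  rw [hsetroots, Set.encard_coe_eq_coe_finsetCard, hprim.card_nthRootsFinset]
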